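/- Any finite or countable collection of pairwise non-overlapping axis-parallel rectangles contained in the triangle T = {(x_1,x_2) ∈ [0,1]² : x_2 ≤ x_1}, when any m of them are selected, has total area at most m/(2(m+1)). -/

import Mathlib

open MeasureTheory
open scoped ENNReal NNReal

/-- The staircase function `x ↦ max {a i : i ∈ s, a i ≤ x}` (as an `ℝ≥0` value). -/
noncomputable def stmt8stair (a : ℕ → ℝ) (s : Finset ℕ) (x : ℝ) : ℝ≥0 :=
  s.sup fun i => if a i ≤ x then Real.toNNReal (a i) else 0

/-- Core estimate: the integral of the staircase over `[0,T]` is at most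
`T² · n / (2(n+1))`. -/
lemma stmt8stair_key (a : ℕ → ℝ) :
    ∀ (n : ℕ) (s : Finset ℕ), s.card = n → ∀ T : ℝ, 0 ≤ T →
      (∀ i ∈ s, 0 ≤ a i) → (∀ i ∈ s, a i ≤ T) →
    (∫⁻ x in Set.Ioc 0 T, (stmt8stair a s x : ℝ≥0∞)) ≤
      ENNReal.ofReal (T ^ 2 * n / (2 * (n + 1))) := by
  intro n
  induction n with
  | zero =>
      intro s hs T hT ha hb
      rw [Finset.card_eq_zero] at hs
      subst hs
      simp [stmt8stair]
  | succ n ih =>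
      intro s hs T hT ha hb
      have hne : s.Nonempty := Finset.card_pos.mp (by omega)
      obtain ⟨i0, hi0, hmax⟩ := s.exists_max_image a hne
      set A := a i0 with hAdef
      have hA0 : 0 ≤ A := ha i0 hi0
      have hAT : A ≤ T := hb i0 hi0
      set s' := s.erase i0 with hs'def
      have hcard : s'.card = n := by
        rw [hs'def, Finset.card_erase_of_mem hi0, hs]
        omega
      have hins : s = insert i0 s' := (Finset.insert_erase hi0).symm
      have hsplit : Set.Ioc (0:ℝ) T = Set.Ioc 0 A ∪ Set.Ioc A T :=
        (Set.Ioc_union_Ioc_eq_Ioc hA0 hAT).symm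
      rw [hsplit, lintegral_union measurableSet_Ioc (Set.Ioc_disjoint_Ioc_of_le le_rfl)]
      -- Part 1: on (0, A] the staircase of s a.e. equals the staircase of s'
      have hae : ∀ᵐ x ∂(volume.restrict (Set.Ioc (0:ℝ) A)),
          (stmt8stair a s x : ℝ≥0∞) = (stmt8stair a s' x : ℝ≥0∞) := by
        have hne' : ∀ᵐ x : ℝ, x ≠ A := by
          rw [ae_iff]
          have : {x : ℝ | ¬ x ≠ A} = {A} := by ext x; simp
          rw [this]; exact measure_singleton A
        filter_upwards [ae_restrict_mem measurableSet_Ioc, ae_restrict_of_ae hne'] with x hx hxA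
        have hxA' : ¬ A ≤ x := fun h => hxA (le_antisymm hx.2 h)
        have : stmt8stair a s x = stmt8stair a s' x := by
          rw [hins]
          unfold stmt8stair
          rw [Finset.sup_insert, if_neg hxA']
          exact bot_sup_eq _
        rw [this]
      have h1 : (∫⁻ x in Set.Ioc (0:ℝ) A, (stmt8stair a s x : ℝ≥0∞)) ≤
          ENNReal.ofReal (A ^ 2 * n / (2 * (n + 1))) := by
        rw [lintegral_congr_ae hae]
        exact ih s' hcard A hA0 (fun i hi => ha i (Finset.erase_subset _ _ hi))
          (fun i hi => hmax i (Finset.erase_subset _ _ hi))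
      -- Part 2: on (A, T] the staircase of s is constantly A
      have h2 : (∫⁻ x in Set.Ioc A T, (stmt8stair a s x : ℝ≥0∞)) =
          ENNReal.ofReal A * ENNReal.ofReal (T - A) := by
        have hconst : ∀ x ∈ Set.Ioc A T, (stmt8stair a s x : ℝ≥0∞) = ENNReal.ofReal A := by
          intro x hx
          have hAx : A ≤ x := le_of_lt hx.1
          have : stmt8stair a s x = Real.toNNReal A := by
            apply le_antisymm
            · apply Finset.sup_le
              intro j hj
              split_ifs with h
              · exact Real.toNNReal_mono (hmax j hj)
              · exact zero_le
            · have h := Finset.le_sup (α := ℝ≥0)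
                (f := fun i => if a i ≤ x then Real.toNNReal (a i) else 0) hi0
              convert h using 1
              exact (if_pos (show a i0 ≤ x from hAx)).symm
              rfl
          rw [this]
          rfl
        calc (∫⁻ x in Set.Ioc A T, (stmt8stair a s x : ℝ≥0∞))
            = ∫⁻ _ in Set.Ioc A T, ENNReal.ofReal A := by
              apply setLIntegral_congr_fun measurableSet_Ioc
              exact hconst
          _ = ENNReal.ofReal A * ENNReal.ofReal (T - A) := by
              rw [setLIntegral_const, Real.volume_Ioc]
      rw [h2]
      calc (∫⁻ x in Set.Ioc (0:ℝ) A, (stmt8stair a s x : ℝ≥0∞)) +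
            ENNReal.ofReal A * ENNReal.ofReal (T - A)
          ≤ ENNReal.ofReal (A ^ 2 * n / (2 * (n + 1))) +
            ENNReal.ofReal A * ENNReal.ofReal (T - A) := by
            exact add_le_add_left h1 _
        _ = ENNReal.ofReal (A ^ 2 * n / (2 * (n + 1)) + A * (T - A)) := by
            rw [← ENNReal.ofReal_mul hA0, ← ENNReal.ofReal_add (by positivity)
              (mul_nonneg hA0 (by linarith))]
        _ ≤ ENNReal.ofReal (T ^ 2 * (n + 1 : ℕ) / (2 * ((n + 1 : ℕ) + 1))) := by
            apply ENNReal.ofReal_le_ofReal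
            push_cast
            set c : ℝ := (n : ℝ) with hc
            have hc0 : (0:ℝ) ≤ c := Nat.cast_nonneg n
            rw [div_add' _ _ _ (by positivity), div_le_div_iff₀ (by positivity) (by positivity)]
            nlinarith [sq_nonneg ((c + 1) * T - (c + 2) * A), sq_nonneg (T - A), hc0, hA0, hAT]

/-- Any countable collection of pairwise non-overlapping axis-parallel
rectangles contained in the triangle `T = {(x₁,x₂) ∈ [0,1]² : x₂ ≤ x₁}` has, for any
selection of `m` of them, total area at most `m / (2(m+1))`. -/
theorem stmt8 (a b c d : ℕ → ℝ)
    (hab : ∀ i, a i ≤ b i) (hcd : ∀ i, c i ≤ d i)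
    (hsub : ∀ i, (Set.Icc (a i) (b i) ×ˢ Set.Icc (c i) (d i)) ⊆
      {p : ℝ × ℝ | p.1 ∈ Set.Icc (0 : ℝ) 1 ∧ p.2 ∈ Set.Icc (0 : ℝ) 1 ∧ p.2 ≤ p.1})
    (hdisj : ∀ i j, i ≠ j →
      interior (Set.Icc (a i) (b i) ×ˢ Set.Icc (c i) (d i)) ∩
        interior (Set.Icc (a j) (b j) ×ˢ Set.Icc (c j) (d j)) = ∅)
    (m : ℕ) (s : Finset ℕ) (hs : s.card = m) :
    (∑ i ∈ s, volume (Set.Icc (a i) (b i) ×ˢ Set.Icc (c i) (d i))) ≤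
      ENNReal.ofReal ((m : ℝ) / (2 * (m + 1))) := by
  -- basic corner facts
  have hfact : ∀ i, 0 ≤ a i ∧ a i ≤ 1 ∧ d i ≤ a i ∧ b i ≤ 1 ∧ 0 ≤ c i := by
    intro i
    have h1 := hsub i (Set.mk_mem_prod ⟨le_rfl, hab i⟩ ⟨hcd i, le_rfl⟩ :
      ((a i, d i) : ℝ × ℝ) ∈ Set.Icc (a i) (b i) ×ˢ Set.Icc (c i) (d i))
    have h2 := hsub i (Set.mk_mem_prod ⟨hab i, le_rfl⟩ ⟨le_rfl, hcd i⟩ :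
      ((b i, c i) : ℝ × ℝ) ∈ Set.Icc (a i) (b i) ×ˢ Set.Icc (c i) (d i))
    exact ⟨h1.1.1, h1.1.2, h1.2.2, h2.1.2, h2.2.1.1⟩
  have ha0 : ∀ i, 0 ≤ a i := fun i => (hfact i).1
  have ha1 : ∀ i, a i ≤ 1 := fun i => (hfact i).2.1
  have hda : ∀ i, d i ≤ a i := fun i => (hfact i).2.2.1
  have hb1 : ∀ i, b i ≤ 1 := fun i => (hfact i).2.2.2.1
  have hc0 : ∀ i, 0 ≤ c i := fun i => (hfact i).2.2.2.2
  -- replace each rectangle's volume by the volume of its interior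
  set R : ℕ → Set (ℝ × ℝ) := fun i => Set.Icc (a i) (b i) ×ˢ Set.Icc (c i) (d i) with hR
  have hint : ∀ i, interior (R i) = Set.Ioo (a i) (b i) ×ˢ Set.Ioo (c i) (d i) := by
    intro i
    rw [hR, interior_prod_eq, interior_Icc, interior_Icc]
  have hvol : ∀ i, volume (R i) = volume (interior (R i)) := by
    intro i
    rw [hint i, hR]
    rw [Measure.volume_eq_prod, Measure.prod_prod, Measure.prod_prod,
      Real.volume_Icc, Real.volume_Icc, Real.volume_Ioo, Real.volume_Ioo]
  have hdisj' : (↑s : Set ℕ).PairwiseDisjoint fun i => interior (R i) := by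
    intro i _ j _ hij
    exact Set.disjoint_iff_inter_eq_empty.mpr (hdisj i j hij)
  have hUmeas : MeasurableSet (⋃ i ∈ s, interior (R i)) :=
    MeasurableSet.biUnion s.countable_toSet (fun _ _ => isOpen_interior.measurableSet)
  calc (∑ i ∈ s, volume (R i)) = ∑ i ∈ s, volume (interior (R i)) :=
        Finset.sum_congr rfl (fun i _ => hvol i)
    _ = volume (⋃ i ∈ s, interior (R i)) :=
        (measure_biUnion_finset hdisj' (fun _ _ => isOpen_interior.measurableSet)).symm
    _ ≤ ∫⁻ x in Set.Ioc (0:ℝ) 1, (stmt8stair a s x : ℝ≥0∞) := by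
        rw [Measure.volume_eq_prod, Measure.prod_apply hUmeas]
        calc (∫⁻ x, volume (Prod.mk x ⁻¹' ⋃ i ∈ s, interior (R i)))
            ≤ ∫⁻ x, (Set.Ioc (0:ℝ) 1).indicator (fun x => (stmt8stair a s x : ℝ≥0∞)) x := by
              apply lintegral_mono
              intro x
              by_cases hx : x ∈ Set.Ioc (0:ℝ) 1
              · rw [Set.indicator_of_mem hx]
                have hss : Prod.mk x ⁻¹' (⋃ i ∈ s, interior (R i)) ⊆
                    Set.Ico 0 ((stmt8stair a s x : ℝ≥0) : ℝ) := by
                  intro y hy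
                  simp only [Set.mem_preimage, Set.mem_iUnion] at hy
                  obtain ⟨i, hi, hyi⟩ := hy
                  rw [hint i] at hyi
                  obtain ⟨hx1, hy1⟩ := hyi
                  refine ⟨le_of_lt (lt_of_le_of_lt (hc0 i) hy1.1), ?_⟩
                  have h3 : Real.toNNReal (a i) ≤ stmt8stair a s x := by
                    have h := Finset.le_sup (α := ℝ≥0)
                      (f := fun i => if a i ≤ x then Real.toNNReal (a i) else 0) hi
                    convert h using 1
                    exact (if_pos hx1.1.le).symm
                    rfl
                  calc y < d i := hy1.2
                    _ ≤ a i := hda i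
                    _ = (Real.toNNReal (a i) : ℝ) := (Real.coe_toNNReal _ (ha0 i)).symm
                    _ ≤ _ := NNReal.coe_le_coe.mpr h3
                refine le_trans (measure_mono hss) ?_
                rw [Real.volume_Ico, sub_zero, ENNReal.ofReal_coe_nnreal]
              · rw [Set.indicator_of_notMem hx]
                have hempty : Prod.mk x ⁻¹' (⋃ i ∈ s, interior (R i)) = ∅ := by
                  ext y
                  simp only [Set.mem_preimage, Set.mem_iUnion, Set.mem_empty_iff_false,
                    iff_false, not_exists]
                  intro i hi hyi
                  rw [hint i] at hyi
                  obtain ⟨hx1, _⟩ := hyi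
                  exact hx ⟨lt_of_le_of_lt (ha0 i) hx1.1, le_of_lt (lt_of_lt_of_le hx1.2 (hb1 i))⟩
                simp [hempty]
          _ = ∫⁻ x in Set.Ioc (0:ℝ) 1, (stmt8stair a s x : ℝ≥0∞) :=
              lintegral_indicator measurableSet_Ioc _
    _ ≤ ENNReal.ofReal ((1:ℝ) ^ 2 * m / (2 * (m + 1))) :=
        stmt8stair_key a m s hs 1 zero_le_one (fun i _ => ha0 i) (fun i _ => ha1 i)
    _ = ENNReal.ofReal ((m : ℝ) / (2 * (m + 1))) := by norm_num
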